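/- Let x ∈ L²(Ω, ℝ^m) and let z_0, …, z_p be pairwise uncorrelated random vectors with z_j ∈ L²(Ω, ℝ^{q_j}). For j = 0, …, p, let A_j = E_{x z_j}(E_{z_j z_j}^{1/2})^†. Then the error ε^{(p)}_{GH} = min over G_j ∈ ℝ^{m×r_j}, H_j ∈ ℝ^{r_j×q_j} (j = 0,…,p) of ‖x − Σ_{j=0}^p G_j H_j z_j‖²_Ω satisfies the lower bound ε^{(p)}_{GH} ≥ tr(E_{xx} − Σ_{j=0}^{p} A_j A_j^T). -/

import Mathlib

open MeasureTheory Matrix Finset Filter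

noncomputable section

/-- The covariance matrix `E_{xy}` of two random vectors. -/
def covM {Ω : Type} [MeasurableSpace Ω] (μ : Measure Ω) {m n : ℕ}
    (x : Ω → Fin m → ℝ) (y : Ω → Fin n → ℝ) : Matrix (Fin m) (Fin n) ℝ :=
  Matrix.of fun i j => ∫ ω, x ω i * y ω j ∂μ

/-- The squared norm `‖x‖²_Ω` of a random vector. -/
def sqnormOm {Ω : Type} [MeasurableSpace Ω] (μ : Measure Ω) {m : ℕ}
    (x : Ω → Fin m → ℝ) : ℝ :=
  ∫ ω, ∑ j, (x ω j) ^ 2 ∂μ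

/-- The Moore–Penrose conditions. -/
def IsMoorePenrose {m n : ℕ} (A : Matrix (Fin m) (Fin n) ℝ)
    (B : Matrix (Fin n) (Fin m) ℝ) : Prop :=
  A * B * A = A ∧ B * A * B = B ∧ (A * B)ᵀ = A * B ∧ (B * A)ᵀ = B * A

/-- The Moore–Penrose pseudoinverse `M^†`. -/
def mpinv {m n : ℕ} (A : Matrix (Fin m) (Fin n) ℝ) : Matrix (Fin n) (Fin m) ℝ :=
  Classical.epsilon fun B => IsMoorePenrose A B

/-- The symmetric positive semidefinite square root `M^{1/2}` of a PSD matrix. -/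
def msqrtM {n : ℕ} (M : Matrix (Fin n) (Fin n) ℝ) : Matrix (Fin n) (Fin n) ℝ :=
  Classical.epsilon fun S => S.PosSemidef ∧ S * S = M

/-- Squared Frobenius norm. -/
def frobSq {m n : ℕ} (A : Matrix (Fin m) (Fin n) ℝ) : ℝ := ∑ i, ∑ j, (A i j) ^ 2

/-- `(u, v, σ)` is a singular value decomposition of `A`:
`A = ∑ k σ_k u_k v_kᵀ` with orthonormal `u`'s and `v`'s and
nonnegative singular values in decreasing order. -/
def IsSVDOf {m n : ℕ} (A : Matrix (Fin m) (Fin n) ℝ)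
    (u : ℕ → Fin m → ℝ) (v : ℕ → Fin n → ℝ) (σ : ℕ → ℝ) : Prop :=
  (∀ k l, k < min m n → l < min m n → u k ⬝ᵥ u l = if k = l then (1 : ℝ) else 0) ∧
  (∀ k l, k < min m n → l < min m n → v k ⬝ᵥ v l = if k = l then (1 : ℝ) else 0) ∧
  (∀ k, 0 ≤ σ k) ∧ Antitone σ ∧ (∀ k, min m n ≤ k → σ k = 0) ∧
  A = ∑ k ∈ Finset.range (min m n), σ k • vecMulVec (u k) (v k)

section Aux

variable {Ω : Type} [MeasurableSpace Ω] {μ : Measure Ω}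

lemma covM_apply {m n : ℕ} (x : Ω → Fin m → ℝ) (y : Ω → Fin n → ℝ) (i : Fin m) (j : Fin n) :
    covM μ x y i j = ∫ ω, x ω i * y ω j ∂μ := rfl

lemma memLp_coord {m : ℕ} {f : Ω → Fin m → ℝ} (hf : MemLp f 2 μ) (i : Fin m) :
    MemLp (fun ω => f ω i) 2 μ := by
  simpa [Function.comp_def] using
    (ContinuousLinearMap.proj (R := ℝ) (φ := fun _ : Fin m => ℝ) i).comp_memLp' hf

lemma int_mul {f g : Ω → ℝ} (hf : MemLp f 2 μ) (hg : MemLp g 2 μ) :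
    Integrable (fun ω => f ω * g ω) μ := by
  have h1 : Integrable
      (fun ω => (1/2 : ℝ) * (((f + g) ω ^ 2 - f ω ^ 2) - g ω ^ 2)) μ :=
    ((((hf.add hg).integrable_sq).sub hf.integrable_sq).sub hg.integrable_sq).const_mul _
  refine h1.congr (Eventually.of_forall fun ω => ?_)
  simp only [Pi.add_apply]; ring

lemma memLp_lincomb {n : ℕ} {v : Ω → Fin n → ℝ} (hv : MemLp v 2 μ) (c : Fin n → ℝ) :
    MemLp (fun ω => ∑ k, c k * v ω k) 2 μ :=
  memLp_finset_sum _ fun k _ => (memLp_coord hv k).const_mul (c k)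

lemma LB {a b : ℕ} {u : Ω → Fin a → ℝ} {v : Ω → Fin b → ℝ}
    (hu : MemLp u 2 μ) (hv : MemLp v 2 μ) (c : Fin a → ℝ) (d : Fin b → ℝ) :
    ∫ ω, (∑ k, c k * u ω k) * (∑ l, d l * v ω l) ∂μ
      = ∑ k, ∑ l, c k * d l * ∫ ω, u ω k * v ω l ∂μ := by
  have h : ∀ ω, (∑ k, c k * u ω k) * (∑ l, d l * v ω l)
      = ∑ k, ∑ l, c k * d l * (u ω k * v ω l) := by
    intro ω
    rw [Finset.sum_mul_sum]
    exact Finset.sum_congr rfl fun k _ => Finset.sum_congr rfl fun l _ => by ring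
  simp_rw [h]
  rw [integral_finset_sum _ fun k _ => integrable_finset_sum _ fun l _ =>
    (int_mul (memLp_coord hu k) (memLp_coord hv l)).const_mul _]
  refine Finset.sum_congr rfl fun k _ => ?_
  rw [integral_finset_sum _ fun l _ => (int_mul (memLp_coord hu k) (memLp_coord hv l)).const_mul _]
  exact Finset.sum_congr rfl fun l _ => integral_const_mul _ _

lemma LC {n : ℕ} {h : Ω → ℝ} {v : Ω → Fin n → ℝ} (hh : MemLp h 2 μ) (hv : MemLp v 2 μ)
    (c : Fin n → ℝ) :
    ∫ ω, h ω * (∑ k, c k * v ω k) ∂μ = ∑ k, c k * ∫ ω, h ω * v ω k ∂μ := by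
  have hw : ∀ ω, h ω * (∑ k, c k * v ω k) = ∑ k, c k * (h ω * v ω k) := by
    intro ω; rw [Finset.mul_sum]; exact Finset.sum_congr rfl fun k _ => by ring
  simp_rw [hw]
  rw [integral_finset_sum _ fun k _ => (int_mul hh (memLp_coord hv k)).const_mul _]
  exact Finset.sum_congr rfl fun k _ => integral_const_mul _ _

lemma LS {ι : Type*} [Fintype ι] {h : Ω → ℝ} (hh : MemLp h 2 μ) {g : ι → Ω → ℝ}
    (hg : ∀ j, MemLp (g j) 2 μ) :
    ∫ ω, h ω * ∑ j, g j ω ∂μ = ∑ j, ∫ ω, h ω * g j ω ∂μ := by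
  simp_rw [Finset.mul_sum]
  exact integral_finset_sum _ fun j _ => int_mul hh (hg j)

lemma LS2 {ι ι' : Type*} [Fintype ι] [Fintype ι'] {g : ι → Ω → ℝ} {f : ι' → Ω → ℝ}
    (hg : ∀ j, MemLp (g j) 2 μ) (hf : ∀ j, MemLp (f j) 2 μ) :
    ∫ ω, (∑ j, g j ω) * (∑ j', f j' ω) ∂μ = ∑ j, ∑ j', ∫ ω, g j ω * f j' ω ∂μ := by
  simp_rw [Finset.sum_mul_sum]
  rw [integral_finset_sum _ fun j _ => integrable_finset_sum _ fun j' _ => int_mul (hg j) (hf j')]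
  exact Finset.sum_congr rfl fun j _ => integral_finset_sum _ fun j' _ => int_mul (hg j) (hf j')

lemma covM_posSemidef {n : ℕ} {v : Ω → Fin n → ℝ} (hv : MemLp v 2 μ) :
    (covM μ v v).PosSemidef := by
  rw [posSemidef_iff_dotProduct_mulVec]
  constructor
  · show (covM μ v v)ᴴ = _
    ext i j
    simp only [conjTranspose_apply, star_trivial, covM_apply]
    simp_rw [mul_comm]
  · intro c
    simp only [star_trivial]
    have e1 : dotProduct c (covM μ v v *ᵥ c) = ∑ k, ∑ l, c k * c l * covM μ v v k l := by
      simp only [dotProduct, Matrix.mulVec, Finset.mul_sum]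
      exact Finset.sum_congr rfl fun k _ => Finset.sum_congr rfl fun l _ => by ring
    rw [e1, show ∑ k, ∑ l, c k * c l * covM μ v v k l
        = ∫ ω, (∑ k, c k * v ω k) * (∑ l, c l * v ω l) ∂μ from (LB hv hv c c).symm]
    exact integral_nonneg fun ω => mul_self_nonneg _

lemma ae_zero_of_covM_mulVec_eq_zero {n : ℕ} {v : Ω → Fin n → ℝ} (hv : MemLp v 2 μ)
    (c : Fin n → ℝ) (hc : covM μ v v *ᵥ c = 0) :
    (fun ω => ∑ k, c k * v ω k) =ᵐ[μ] 0 := by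
  have hint : Integrable (fun ω => (∑ k, c k * v ω k) ^ 2) μ := (memLp_lincomb hv c).integrable_sq
  have h0 : ∫ ω, (∑ k, c k * v ω k) ^ 2 ∂μ = 0 := by
    have e1 : ∫ ω, (∑ k, c k * v ω k) ^ 2 ∂μ = ∑ k, ∑ l, c k * c l * covM μ v v k l := by
      simp_rw [pow_two]
      exact LB hv hv c c
    have e2 : ∑ k, ∑ l, c k * c l * covM μ v v k l = dotProduct c (covM μ v v *ᵥ c) := by
      simp only [dotProduct, Matrix.mulVec, Finset.mul_sum]
      exact Finset.sum_congr rfl fun k _ => Finset.sum_congr rfl fun l _ => by ring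
    rw [e1, e2, hc]
    simp
  have hae := (integral_eq_zero_iff_of_nonneg (fun ω => sq_nonneg _) hint).mp h0
  filter_upwards [hae] with ω hω
  simp only [Pi.zero_apply] at hω ⊢
  exact pow_eq_zero_iff two_ne_zero |>.mp hω

lemma exists_mp {n : ℕ} {S : Matrix (Fin n) (Fin n) ℝ} (hS : S.IsHermitian) :
    ∃ B, IsMoorePenrose S B := by
  classical
  set U : Matrix (Fin n) (Fin n) ℝ := (hS.eigenvectorUnitary : Matrix (Fin n) (Fin n) ℝ) with hU
  have hU2 : star U * U = 1 := Matrix.mem_unitaryGroup_iff'.mp hS.eigenvectorUnitary.2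
  set e : Fin n → ℝ := RCLike.ofReal ∘ hS.eigenvalues with he
  have hSpec : S = U * diagonal e * star U := hS.spectral_theorem
  have key : ∀ a b : Fin n → ℝ, (U * diagonal a * star U) * (U * diagonal b * star U)
      = U * diagonal (a * b) * star U := by
    intro a b
    calc (U * diagonal a * star U) * (U * diagonal b * star U)
        = U * (diagonal a * ((star U * U) * (diagonal b * star U))) := by
          simp only [Matrix.mul_assoc]
      _ = U * (diagonal a * diagonal b * star U) := by
          rw [hU2, Matrix.one_mul, Matrix.mul_assoc]
      _ = U * diagonal (a * b) * star U := by
          rw [diagonal_mul_diagonal, Matrix.mul_assoc]; rfl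
  have hct : ∀ M : Matrix (Fin n) (Fin n) ℝ, Mᴴ = Mᵀ := by
    intro M; ext i j; simp [conjTranspose_apply]
  have hsymm : ∀ a : Fin n → ℝ, (U * diagonal a * star U)ᵀ = U * diagonal a * star U := by
    intro a
    rw [← hct, Matrix.star_eq_conjTranspose, conjTranspose_mul, conjTranspose_mul,
      conjTranspose_conjTranspose, diagonal_conjTranspose]
    have hsa : star a = a := by funext k; simp
    rw [hsa, Matrix.mul_assoc]
  refine ⟨U * diagonal (fun k => (e k)⁻¹) * star U, ?_, ?_, ?_, ?_⟩
  · rw [hSpec, key, key]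
    have harith : (e * fun k => (e k)⁻¹) * e = e := by
      funext k; simp only [Pi.mul_apply]
      rcases eq_or_ne (e k) 0 with h | h
      · simp [h]
      · field_simp
    rw [harith]
  · rw [hSpec, key, key]
    have harith : ((fun k => (e k)⁻¹) * e) * (fun k => (e k)⁻¹) = fun k => (e k)⁻¹ := by
      funext k; simp only [Pi.mul_apply]
      rcases eq_or_ne (e k) 0 with h | h
      · simp [h]
      · field_simp
    rw [harith]
  · rw [hSpec, key]; exact hsymm _
  · rw [hSpec, key]; exact hsymm _

lemma mp_spec {n : ℕ} {S : Matrix (Fin n) (Fin n) ℝ} (hS : S.IsHermitian) :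
    IsMoorePenrose S (mpinv S) :=
  Classical.epsilon_spec (exists_mp hS)

open scoped MatrixOrder in
lemma msqrt_spec {n : ℕ} {M : Matrix (Fin n) (Fin n) ℝ} (hM : M.PosSemidef) :
    (msqrtM M).PosSemidef ∧ msqrtM M * msqrtM M = M :=
  Classical.epsilon_spec (p := fun S => S.PosSemidef ∧ S * S = M)
    ⟨CFC.sqrt M, (CFC.sqrt_nonneg M).posSemidef, CFC.sqrt_mul_sqrt_self M hM.nonneg⟩

lemma cov_eq {m n : ℕ} {x : Ω → Fin m → ℝ} {v : Ω → Fin n → ℝ}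
    (hx : MemLp x 2 μ) (hv : MemLp v 2 μ) :
    covM μ x v * mpinv (msqrtM (covM μ v v)) * msqrtM (covM μ v v) = covM μ x v := by
  set S := msqrtM (covM μ v v) with hSdef
  obtain ⟨hSpsd, hSS⟩ := msqrt_spec (covM_posSemidef hv)
  have hMP := mp_spec hSpsd.1
  set P := mpinv S with hPdef
  have h1 : S * (P * S) = S := by rw [← Matrix.mul_assoc]; exact hMP.1
  have h2 : covM μ v v * (1 - P * S) = 0 := by
    rw [← hSS, Matrix.mul_sub, Matrix.mul_one, Matrix.mul_assoc, h1, sub_self]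
  set N : Matrix (Fin n) (Fin n) ℝ := 1 - P * S with hNdef
  have h3 : covM μ x v * N = 0 := by
    ext i k
    have hcol : covM μ v v *ᵥ (fun l => N l k) = 0 := by
      ext a
      have h2' := congrFun (congrFun h2 a) k
      simpa [Matrix.mulVec, dotProduct, Matrix.mul_apply] using h2'
    have hzero := ae_zero_of_covM_mulVec_eq_zero hv (fun l => N l k) hcol
    have e1 : (covM μ x v * N) i k = ∫ ω, x ω i * (∑ l, N l k * v ω l) ∂μ := by
      rw [LC (memLp_coord hx i) hv (fun l => N l k), Matrix.mul_apply]
      refine Finset.sum_congr rfl fun l _ => ?_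
      rw [covM_apply]; ring
    rw [e1]
    have hz2 : (fun ω => x ω i * (∑ l, N l k * v ω l)) =ᵐ[μ] 0 := by
      filter_upwards [hzero] with ω hω
      simp only [Pi.zero_apply] at hω ⊢
      rw [hω, mul_zero]
    rw [integral_congr_ae hz2]
    simp
  have h4 : covM μ x v * (P * S) = covM μ x v := by
    have h5 : covM μ x v * N = covM μ x v - covM μ x v * (P * S) := by
      rw [hNdef, Matrix.mul_sub, Matrix.mul_one]
    rw [h5] at h3
    exact (sub_eq_zero.mp h3).symm
  rw [Matrix.mul_assoc]
  exact h4

end Aux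

/-- the lower bound
`ε^{(p)}_{GH} ≥ tr(E_{xx} − Σ_j A_j A_jᵀ)` where `A_j = E_{xz_j}(E_{z_jz_j}^{1/2})^†`;
equivalently, every admissible choice of `G_j, H_j` gives an error at least this. -/
theorem stmt9 {Ω : Type} [MeasurableSpace Ω] (μ : Measure Ω) [IsProbabilityMeasure μ]
    {m p : ℕ} (q r : Fin (p + 1) → ℕ) (x : Ω → Fin m → ℝ)
    (z : ∀ j, Ω → Fin (q j) → ℝ)
    (hx : MemLp x 2 μ) (hz : ∀ j, MemLp (z j) 2 μ)
    (huncorr : ∀ i j, i ≠ j → covM μ (z i) (z j) = 0)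
    (A : ∀ j, Matrix (Fin m) (Fin (q j)) ℝ)
    (hA : ∀ j, A j = covM μ x (z j) * mpinv (msqrtM (covM μ (z j) (z j))))
    (G : ∀ j, Matrix (Fin m) (Fin (r j)) ℝ)
    (H : ∀ j, Matrix (Fin (r j)) (Fin (q j)) ℝ) :
    (covM μ x x - ∑ j, A j * (A j)ᵀ).trace
      ≤ sqnormOm μ (fun ω => x ω - ∑ j, (G j * H j) *ᵥ z j ω) := by
  classical
  have hxi : ∀ i, MemLp (fun ω => x ω i) 2 μ := fun i => memLp_coord hx i
  set S : ∀ j, Matrix (Fin (q j)) (Fin (q j)) ℝ :=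
    fun j => msqrtM (covM μ (z j) (z j)) with hSdef
  have hSspec : ∀ j, (S j).PosSemidef ∧ S j * S j = covM μ (z j) (z j) :=
    fun j => msqrt_spec (covM_posSemidef (hz j))
  have hkey : ∀ j, A j * S j = covM μ x (z j) := by
    intro j; rw [hA j]; exact cov_eq hx (hz j)
  set C : ∀ j, Matrix (Fin m) (Fin (q j)) ℝ := fun j => (G j * H j) * S j with hCdef
  set W : Ω → Fin m → ℝ := fun ω i => ∑ j, ∑ k, (G j * H j) i k * z j ω k with hWdef
  have hWj : ∀ (i : Fin m) j, MemLp (fun ω => ∑ k, (G j * H j) i k * z j ω k) 2 μ :=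
    fun i j => memLp_lincomb (hz j) _
  have hWi : ∀ i, MemLp (fun ω => W ω i) 2 μ := fun i =>
    memLp_finset_sum _ (fun j _ => hWj i j)
  -- Expansion of the squared norm
  have E1 : sqnormOm μ (fun ω => x ω - ∑ j, (G j * H j) *ᵥ z j ω)
      = (∑ i, ∫ ω, (x ω i)^2 ∂μ) - 2 * (∑ i, ∫ ω, x ω i * W ω i ∂μ)
        + ∑ i, ∫ ω, (W ω i)^2 ∂μ := by
    have hpt : ∀ ω, ∑ i, ((x ω - ∑ j, (G j * H j) *ᵥ z j ω) i)^2
        = (∑ i, (x ω i)^2) - 2 * (∑ i, x ω i * W ω i) + ∑ i, (W ω i)^2 := by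
      intro ω
      have h1 : ∀ i, (x ω - ∑ j, (G j * H j) *ᵥ z j ω) i = x ω i - W ω i := by
        intro i
        simp [hWdef, Matrix.mulVec, dotProduct, Finset.sum_apply, Pi.sub_apply]
      simp_rw [h1]
      rw [Finset.mul_sum, ← Finset.sum_sub_distrib, ← Finset.sum_add_distrib]
      exact Finset.sum_congr rfl fun i _ => by ring
    unfold sqnormOm
    rw [integral_congr_ae (Eventually.of_forall hpt)]
    have Ia : Integrable (fun ω => ∑ i, (x ω i)^2) μ :=
      integrable_finset_sum _ fun i _ => (hxi i).integrable_sq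
    have Ib : Integrable (fun ω => 2 * ∑ i, x ω i * W ω i) μ :=
      (integrable_finset_sum _ fun i _ => int_mul (hxi i) (hWi i)).const_mul 2
    have Ic : Integrable (fun ω => ∑ i, (W ω i)^2) μ :=
      integrable_finset_sum _ fun i _ => (hWi i).integrable_sq
    have Iab : Integrable (fun ω => (∑ i, (x ω i)^2) - 2 * ∑ i, x ω i * W ω i) μ := Ia.sub Ib
    rw [integral_add Iab Ic, integral_sub Ia Ib, integral_const_mul,
      integral_finset_sum _ (fun i _ => (hxi i).integrable_sq),
      integral_finset_sum _ (fun i (_ : i ∈ univ) => int_mul (hxi i) (hWi i)),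
      integral_finset_sum _ (fun i _ => (hWi i).integrable_sq)]
  have E2 : (covM μ x x).trace = ∑ i, ∫ ω, (x ω i)^2 ∂μ := by
    unfold Matrix.trace
    refine Finset.sum_congr rfl fun i _ => ?_
    rw [Matrix.diag_apply, covM_apply]
    simp_rw [pow_two]
  have E3 : ∑ i, ∫ ω, x ω i * W ω i ∂μ
      = ∑ j, ∑ i, ∑ k, (G j * H j) i k * covM μ x (z j) i k := by
    have h1 : ∀ i, ∫ ω, x ω i * W ω i ∂μ
        = ∑ j, ∑ k, (G j * H j) i k * covM μ x (z j) i k := by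
      intro i
      have h2 : ∫ ω, x ω i * W ω i ∂μ
          = ∑ j, ∫ ω, x ω i * (∑ k, (G j * H j) i k * z j ω k) ∂μ := by
        simp only [hWdef]
        exact LS (hxi i) (fun j => hWj i j)
      rw [h2]
      refine Finset.sum_congr rfl fun j _ => ?_
      rw [LC (hxi i) (hz j) _]
      exact Finset.sum_congr rfl fun k _ => by rw [covM_apply]
    simp_rw [h1]
    exact Finset.sum_comm
  have E4 : ∑ i, ∫ ω, (W ω i)^2 ∂μ
      = ∑ j, ∑ j', ∑ i, ∑ k, ∑ l,
          (G j * H j) i k * (G j' * H j') i l * covM μ (z j) (z j') k l := by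
    have h1 : ∀ i, ∫ ω, (W ω i)^2 ∂μ
        = ∑ j, ∑ j', ∑ k, ∑ l,
            (G j * H j) i k * (G j' * H j') i l * covM μ (z j) (z j') k l := by
      intro i
      have h2 : ∫ ω, (W ω i)^2 ∂μ
          = ∑ j, ∑ j', ∫ ω, (∑ k, (G j * H j) i k * z j ω k)
              * (∑ l, (G j' * H j') i l * z j' ω l) ∂μ := by
        simp only [hWdef, pow_two]
        exact LS2 (fun j => hWj i j) (fun j => hWj i j)
      rw [h2]
      refine Finset.sum_congr rfl fun j _ => Finset.sum_congr rfl fun j' _ => ?_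
      rw [LB (hz j) (hz j') _ _]
      exact Finset.sum_congr rfl fun k _ => Finset.sum_congr rfl fun l _ => by rw [covM_apply]
    simp_rw [h1]
    rw [Finset.sum_comm]
    exact Finset.sum_congr rfl fun j _ => Finset.sum_comm
  -- cross terms vanish
  have E5 : ∀ j j', j ≠ j' →
      (∑ i, ∑ k, ∑ l, (G j * H j) i k * (G j' * H j') i l * covM μ (z j) (z j') k l) = 0 := by
    intro j j' hne
    have h0 : covM μ (z j) (z j') = 0 := huncorr j j' hne
    simp [h0]
  -- symmetry of S
  have hsymS : ∀ j a b, S j a b = S j b a := by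
    intro j a b
    have h := (hSspec j).1.1
    conv_lhs => rw [← h]
    simp [conjTranspose_apply]
  have hcov : ∀ j k l, covM μ (z j) (z j) k l = ∑ t, S j k t * S j l t := by
    intro j k l
    rw [← (hSspec j).2, Matrix.mul_apply]
    exact Finset.sum_congr rfl fun t _ => by rw [hsymS j t l]
  have swap3 : ∀ {α β γ : Type} [Fintype α] [Fintype β] [Fintype γ] (f : α → β → γ → ℝ),
      ∑ k, ∑ l, ∑ t, f k l t = ∑ t, ∑ k, ∑ l, f k l t := by
    intro α β γ _ _ _ f
    calc ∑ k, ∑ l, ∑ t, f k l t = ∑ k, ∑ t, ∑ l, f k l t :=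
          Finset.sum_congr rfl fun k _ => Finset.sum_comm
      _ = ∑ t, ∑ k, ∑ l, f k l t := Finset.sum_comm
  have F2 : ∀ j, (∑ i, ∑ k, ∑ l,
        (G j * H j) i k * (G j * H j) i l * covM μ (z j) (z j) k l)
      = ∑ i, ∑ t, (C j i t)^2 := by
    intro j
    refine Finset.sum_congr rfl fun i _ => ?_
    have hC : ∀ t, C j i t = ∑ k, (G j * H j) i k * S j k t := by
      intro t; simp only [hCdef]; rw [Matrix.mul_apply]
    simp_rw [hcov j, Finset.mul_sum, hC, pow_two, Finset.sum_mul_sum]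
    rw [swap3]
    exact Finset.sum_congr rfl fun t _ => Finset.sum_congr rfl fun k _ =>
      Finset.sum_congr rfl fun l _ => by ring
  have F3 : ∀ j, (∑ i, ∑ k, (G j * H j) i k * covM μ x (z j) i k)
      = ∑ i, ∑ t, A j i t * C j i t := by
    intro j
    refine Finset.sum_congr rfl fun i _ => ?_
    have h1 : ∀ k, covM μ x (z j) i k = ∑ t, A j i t * S j t k := by
      intro k; rw [← hkey j, Matrix.mul_apply]
    simp_rw [h1, Finset.mul_sum]
    rw [Finset.sum_comm]
    refine Finset.sum_congr rfl fun t _ => ?_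
    have hC : C j i t = ∑ k, (G j * H j) i k * S j k t := by
      simp only [hCdef]; rw [Matrix.mul_apply]
    rw [hC, Finset.mul_sum]
    exact Finset.sum_congr rfl fun k _ => by rw [hsymS j t k]; ring
  -- assemble
  have L1 : (covM μ x x - ∑ j, A j * (A j)ᵀ).trace
      = (covM μ x x).trace - ∑ j, ∑ i, ∑ t, (A j i t)^2 := by
    rw [Matrix.trace_sub, Matrix.trace_sum]
    congr 1
    refine Finset.sum_congr rfl fun j _ => ?_
    unfold Matrix.trace
    refine Finset.sum_congr rfl fun i _ => ?_
    rw [Matrix.diag_apply, Matrix.mul_apply]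
    exact Finset.sum_congr rfl fun t _ => by rw [Matrix.transpose_apply, pow_two]
  have R1 : ∑ j, ∑ i, ∑ k, (G j * H j) i k * covM μ x (z j) i k
      = ∑ j, ∑ i, ∑ t, A j i t * C j i t :=
    Finset.sum_congr rfl fun j _ => F3 j
  have R2 : (∑ j, ∑ j', ∑ i, ∑ k, ∑ l,
        (G j * H j) i k * (G j' * H j') i l * covM μ (z j) (z j') k l)
      = ∑ j, ∑ i, ∑ t, (C j i t)^2 := by
    refine Finset.sum_congr rfl fun j _ => ?_
    rw [Finset.sum_eq_single j (fun j' _ hne => E5 j j' (fun h => hne h.symm))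
      (fun h => absurd (mem_univ j) h)]
    exact F2 j
  rw [L1, E1, E2, E3, E4, R1, R2]
  have hperj : ∀ j, 2 * (∑ i, ∑ t, A j i t * C j i t) - (∑ i, ∑ t, (A j i t)^2)
      ≤ ∑ i, ∑ t, (C j i t)^2 := by
    intro j
    have hnn : (0:ℝ) ≤ ∑ i, ∑ t, (C j i t - A j i t)^2 :=
      Finset.sum_nonneg fun i _ => Finset.sum_nonneg fun t _ => sq_nonneg _
    have hexp : ∑ i, ∑ t, (C j i t - A j i t)^2
        = (∑ i, ∑ t, (C j i t)^2) - 2 * (∑ i, ∑ t, A j i t * C j i t)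
          + ∑ i, ∑ t, (A j i t)^2 := by
      have h : ∀ (i : Fin m) (t : Fin (q j)), (C j i t - A j i t)^2
          = (C j i t)^2 - 2 * (A j i t * C j i t) + (A j i t)^2 := fun i t => by ring
      simp_rw [h, Finset.sum_add_distrib, Finset.sum_sub_distrib, ← Finset.mul_sum]
    linarith
  have hsumle : ∑ j, (2 * (∑ i, ∑ t, A j i t * C j i t) - (∑ i, ∑ t, (A j i t)^2))
      ≤ ∑ j, ∑ i, ∑ t, (C j i t)^2 :=
    Finset.sum_le_sum fun j _ => hperj j
  rw [Finset.sum_sub_distrib] at hsumle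
  simp_rw [← Finset.mul_sum] at hsumle
  linarith
end
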